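/- arXiv:2309.06785 — 10 statements merged into one kernel-verified Lean document; each statement's English description precedes it below -/
import Mathlib

section
/- Merson's Lemma: Let G be a group with two group topologies γ₁ ⊆ γ (not necessarily Hausdorff) and let H be a subgroup of G. If γ₁ and γ induce the same subspace topology on H and the same quotient topology on the coset space G/H, then γ₁ = γ. -/
open Topology

/-- Subspace topology induced on a subgroup `H` by a topology `t` on `G`. -/
def subTop {G : Type*} [Group G] (t : TopologicalSpace G) (H : Subgroup G) :
    TopologicalSpace H :=
  t.induced ((↑) : H → G)

/-- Quotient topology on the coset space `G ⧸ H` induced by a topology `t` on `G`. -/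
def quotTop {G : Type*} [Group G] (t : TopologicalSpace G) (H : Subgroup G) :
    TopologicalSpace (G ⧸ H) :=
  t.coinduced (QuotientGroup.mk : G → G ⧸ H)

/-- `H` is a key subgroup of `(G, γ)`: every coarser Hausdorff group topology `γ₁`
(`γ ≤ γ₁` in Mathlib's order means `γ₁` is coarser than `γ`) inducing the original
subspace topology on `H` coincides with `γ`. -/
def IsKey {G : Type*} [Group G] (γ : TopologicalSpace G) (H : Subgroup G) : Prop :=
  ∀ γ₁ : TopologicalSpace G, γ ≤ γ₁ → @IsTopologicalGroup G γ₁ _ → @T2Space G γ₁ →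
    subTop γ₁ H = subTop γ H → γ₁ = γ

/-- `H` is a co-key subgroup of `(G, γ)`: every coarser Hausdorff group topology `γ₁`
inducing the original quotient topology on `G ⧸ H` coincides with `γ`. -/
def IsCoKey {G : Type*} [Group G] (γ : TopologicalSpace G) (H : Subgroup G) : Prop :=
  ∀ γ₁ : TopologicalSpace G, γ ≤ γ₁ → @IsTopologicalGroup G γ₁ _ → @T2Space G γ₁ →
    quotTop γ₁ H = quotTop γ H → γ₁ = γ

/-- `H` is relatively minimal in `(G, γ)`: every coarser Hausdorff group topology on `G`
induces the original subspace topology on `H`. -/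
def IsRelMin {G : Type*} [Group G] (γ : TopologicalSpace G) (H : Subgroup G) : Prop :=
  ∀ γ₁ : TopologicalSpace G, γ ≤ γ₁ → @IsTopologicalGroup G γ₁ _ → @T2Space G γ₁ →
    subTop γ₁ H = subTop γ H

/-- `H` is co-minimal in `(G, γ)`: every coarser Hausdorff group topology on `G`
induces the original quotient topology on the coset space `G ⧸ H`. -/
def IsCoMin {G : Type*} [Group G] (γ : TopologicalSpace G) (H : Subgroup G) : Prop :=
  ∀ γ₁ : TopologicalSpace G, γ ≤ γ₁ → @IsTopologicalGroup G γ₁ _ → @T2Space G γ₁ →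
    quotTop γ₁ H = quotTop γ H

/-- `(X, γ)` is a minimal topological group: no strictly coarser Hausdorff group topology. -/
def IsMinimalGroup {X : Type*} [Group X] (γ : TopologicalSpace X) : Prop :=
  ∀ γ₁ : TopologicalSpace X, γ ≤ γ₁ → @IsTopologicalGroup X γ₁ _ → @T2Space X γ₁ → γ₁ = γ

open scoped Pointwise in
/-- Merson's Lemma: if `γ₁ ⊆ γ` are (not necessarily Hausdorff) group topologies on `G`
inducing the same subspace topology on a subgroup `H` and the same quotient topology
on `G ⧸ H`, then `γ₁ = γ`. -/
theorem merson_lemma {G : Type*} [Group G] (γ γ₁ : TopologicalSpace G) (H : Subgroup G)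
    (hγ : @IsTopologicalGroup G γ _) (hγ₁ : @IsTopologicalGroup G γ₁ _)
    (hle : γ ≤ γ₁)
    (hsub : subTop γ₁ H = subTop γ H)
    (hquot : quotTop γ₁ H = quotTop γ H) :
    γ₁ = γ := by
  refine IsTopologicalGroup.ext hγ₁ hγ (le_antisymm ?_ (nhds_mono hle))
  intro U hU
  -- hU : U ∈ @nhds G γ 1 ; goal : U ∈ @nhds G γ₁ 1
  obtain ⟨V, Vopen, V1, hVV⟩ : ∃ V : Set G, IsOpen[γ] V ∧ (1 : G) ∈ V ∧ V * V ⊆ U := by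
    letI := γ; haveI := hγ; exact exists_open_nhds_one_mul_subset hU
  -- transfer the trace of V on H to a γ₁-open set O
  have hVtr : IsOpen[subTop γ H] (((↑) : H → G) ⁻¹' V) := by
    letI := γ; exact isOpen_induced Vopen
  rw [← hsub] at hVtr
  obtain ⟨O, Oopen, hO⟩ : ∃ O : Set G, IsOpen[γ₁] O ∧
      ((↑) : H → G) ⁻¹' O = ((↑) : H → G) ⁻¹' V := by
    letI := γ₁
    rw [show subTop γ₁ H = γ₁.induced ((↑) : H → G) from rfl, isOpen_induced_iff] at hVtr
    exact hVtr
  have hO1 : (1 : G) ∈ O := by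
    have : (⟨1, H.one_mem⟩ : H) ∈ ((↑) : H → G) ⁻¹' O := by rw [hO]; exact V1
    exact this
  obtain ⟨P, Popen, P1, hPP⟩ : ∃ P : Set G, IsOpen[γ₁] P ∧ (1 : G) ∈ P ∧ P * P ⊆ O := by
    letI := γ₁; haveI := hγ₁; exact exists_open_nhds_one_mul_subset (Oopen.mem_nhds hO1)
  -- symmetrize P
  set O₁ : Set G := P ∩ P⁻¹ with hO₁def
  have O₁open : IsOpen[γ₁] O₁ := by
    letI := γ₁; haveI := hγ₁; exact Popen.inter Popen.inv
  have O₁1 : (1 : G) ∈ O₁ := ⟨P1, by simpa using P1⟩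
  set A : Set G := V ∩ O₁ with hAdef
  have Aopen : IsOpen[γ] A := by
    letI := γ; exact Vopen.inter (O₁open.mono hle)
  have A1 : (1 : G) ∈ A := ⟨V1, O₁1⟩
  -- A * H is γ₁-open via the quotient hypothesis
  have hpre : (QuotientGroup.mk : G → G ⧸ H) ⁻¹' (QuotientGroup.mk '' A)
      = A * (H : Set G) := by
    ext x
    constructor
    · rintro ⟨a, haA, hax⟩
      rw [QuotientGroup.eq] at hax
      exact ⟨a, haA, a⁻¹ * x, hax, by group⟩
    · rintro ⟨a, haA, h, hhH, rfl⟩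
      exact ⟨a, haA, by rw [QuotientGroup.eq]; simpa using hhH⟩
  have hAHγ : IsOpen[γ] (A * (H : Set G)) := by
    letI := γ; haveI := hγ; exact Aopen.mul_right
  have hq : IsOpen[γ₁] (A * (H : Set G)) := by
    have h1 : IsOpen[quotTop γ H] (QuotientGroup.mk '' A : Set (G ⧸ H)) := by
      rw [show quotTop γ H = γ.coinduced (QuotientGroup.mk : G → G ⧸ H) from rfl,
        isOpen_coinduced, hpre]
      exact hAHγ
    rw [← hquot, show quotTop γ₁ H = γ₁.coinduced (QuotientGroup.mk : G → G ⧸ H) from rfl,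
      isOpen_coinduced, hpre] at h1
    exact h1
  -- the witness neighborhood
  have hN : O₁ ∩ (A * (H : Set G)) ∈ @nhds G γ₁ 1 := by
    letI := γ₁
    exact (O₁open.inter hq).mem_nhds ⟨O₁1, ⟨1, A1, 1, H.one_mem, by simp⟩⟩
  refine Filter.mem_of_superset hN ?_
  rintro x ⟨hxO₁, a, haA, h, hhH, rfl⟩
  -- a ∈ V ∩ O₁, h ∈ H, a * h ∈ O₁ ; show a * h ∈ U
  have hhO : h ∈ O := by
    have : a⁻¹ * (a * h) ∈ P * P := Set.mul_mem_mul (by simpa using haA.2.2) hxO₁.1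
    simpa using hPP this
  have hhV : h ∈ V := by
    have : (⟨h, hhH⟩ : H) ∈ ((↑) : H → G) ⁻¹' O := hhO
    rw [hO] at this
    exact this
  exact hVV (Set.mul_mem_mul haA.1 hhV)
end

section
/- A subgroup H of a Hausdorff topological group (G, γ) is a key subgroup if and only if for every coarser Hausdorff group topology γ₁ ⊆ γ on G, the equality γ₁|_H = γ|_H of subspace topologies on H implies the equality γ₁/H = γ/H of quotient topologies on G/H. -/
open Topology Pointwise

lemma eq_of_sub_quot {G : Type*} [Group G] (γ γ₁ : TopologicalSpace G) (H : Subgroup G)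
    (hγ : @IsTopologicalGroup G γ _) (hTG : @IsTopologicalGroup G γ₁ _) (hle : γ ≤ γ₁)
    (hsub : subTop γ₁ H = subTop γ H) (hquot : quotTop γ₁ H = quotTop γ H) : γ₁ = γ := by
  refine IsTopologicalGroup.ext hTG hγ ?_
  refine le_antisymm ?_ (nhds_mono hle)
  intro U hU
  -- V : symmetric γ-open nbhd of 1 with V*V ⊆ U
  obtain ⟨V₀, hV₀o, hV₀1, hV₀U⟩ :=
    letI := γ; haveI := hγ; exists_open_nhds_one_mul_subset hU
  set V : Set G := V₀ ∩ V₀⁻¹ with hVdef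
  have hVo : @IsOpen G γ V := by
    letI := γ; haveI := hγ
    exact hV₀o.inter hV₀o.inv
  have hV1 : (1 : G) ∈ V := ⟨hV₀1, by simp [hV₀1]⟩
  have hVsub₀ : V ⊆ V₀ := Set.inter_subset_left
  have hVU : V * V ⊆ U := fun x hx =>
    hV₀U (Set.mul_subset_mul hVsub₀ hVsub₀ hx)
  -- P : γ₁-open with P ∩ H = V ∩ H
  have hVHo : @IsOpen H (subTop γ H) (((↑) : H → G) ⁻¹' V) := ⟨V, hVo, rfl⟩
  rw [← hsub] at hVHo
  obtain ⟨P, hPo, hPV⟩ : ∃ P, @IsOpen G γ₁ P ∧ ((↑) : H → G) ⁻¹' P = ((↑) : H → G) ⁻¹' V :=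
    hVHo
  have hP1 : (1 : G) ∈ P := (Set.ext_iff.mp hPV (1 : H)).mpr hV1
  -- Q : symmetric γ₁-open nbhd of 1 with Q*Q ⊆ P
  obtain ⟨Q₀, hQ₀o, hQ₀1, hQ₀P⟩ :=
    letI := γ₁; haveI := hTG
    exists_open_nhds_one_mul_subset (hPo.mem_nhds hP1)
  set Q : Set G := Q₀ ∩ Q₀⁻¹ with hQdef
  have hQo : @IsOpen G γ₁ Q := by
    letI := γ₁; haveI := hTG
    exact hQ₀o.inter hQ₀o.inv
  have hQ1 : (1 : G) ∈ Q := ⟨hQ₀1, by simp [hQ₀1]⟩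
  -- V' := V ∩ Q, γ-open
  set V' : Set G := V ∩ Q with hV'def
  have hV'o : @IsOpen G γ V' := by
    letI := γ
    exact hVo.inter (hQo.mono hle)
  have hV'1 : (1 : G) ∈ V' := ⟨hV1, hQ1⟩
  -- S := V' * H is γ-open and saturated
  set S : Set G := V' * (H : Set G) with hSdef
  have hSo : @IsOpen G γ S := by
    letI := γ; haveI := hγ
    rw [hSdef]
    exact hV'o.mul_right
  have hsat : (QuotientGroup.mk : G → G ⧸ H) ⁻¹' (QuotientGroup.mk '' S) = S := by
    apply Set.Subset.antisymm
    · rintro x ⟨y, hyS, hxy⟩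
      obtain ⟨v, hv, h, hh, rfl⟩ := hyS
      have hmem : (v * h)⁻¹ * x ∈ H := (QuotientGroup.eq).mp hxy
      have : x = v * (h * ((v * h)⁻¹ * x)) := by group
      rw [this]
      exact ⟨v, hv, h * ((v * h)⁻¹ * x), H.mul_mem hh hmem, rfl⟩
    · exact Set.subset_preimage_image _ _
  -- hence S is γ₁-open
  have hSquot : @IsOpen (G ⧸ H) (quotTop γ H) (QuotientGroup.mk '' S) := by
    show @IsOpen G γ _
    rw [hsat]; exact hSo
  rw [← hquot] at hSquot
  have hSo₁ : @IsOpen G γ₁ S := by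
    have : @IsOpen G γ₁ ((QuotientGroup.mk : G → G ⧸ H) ⁻¹' (QuotientGroup.mk '' S)) := hSquot
    rwa [hsat] at this
  -- W := Q ∩ S works
  have hWU : Q ∩ S ⊆ U := by
    rintro x ⟨hxQ, v, hv, h, hh, rfl⟩
    have hvQ : v ∈ Q := hv.2
    have hhP : h ∈ P := by
      have : h = v⁻¹ * (v * h) := by group
      rw [this]
      exact hQ₀P ⟨v⁻¹, hvQ.2, v * h, hxQ.1, rfl⟩
    have hhV : h ∈ V := (Set.ext_iff.mp hPV ⟨h, hh⟩).mp hhP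
    exact hVU ⟨v, hv.1, h, hhV, rfl⟩
  letI := γ₁; haveI := hTG
  exact Filter.mem_of_superset
    ((hQo.inter hSo₁).mem_nhds ⟨hQ1, ⟨1, hV'1, 1, H.one_mem, mul_one 1⟩⟩) hWU


/-- `H` is a key subgroup of `(G, γ)` iff for every coarser Hausdorff group topology `γ₁`,
equality of the subspace topologies on `H` implies equality of the quotient topologies
on `G ⧸ H`. -/
theorem isKey_iff_subspace_implies_quotient {G : Type*} [Group G] (γ : TopologicalSpace G)
    (hγ : @IsTopologicalGroup G γ _) (hT2 : @T2Space G γ) (H : Subgroup G) :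
    IsKey γ H ↔
      ∀ γ₁ : TopologicalSpace G, γ ≤ γ₁ → @IsTopologicalGroup G γ₁ _ → @T2Space G γ₁ →
        subTop γ₁ H = subTop γ H → quotTop γ₁ H = quotTop γ H := by
  constructor
  · intro hk γ₁ hle hTG hT2 hsub
    rw [hk γ₁ hle hTG hT2 hsub]
  · intro h γ₁ hle hTG hT2 hsub
    exact eq_of_sub_quot γ γ₁ H hγ hTG hle hsub (h γ₁ hle hTG hT2 hsub)
end

section
/- A Hausdorff topological group G is minimal if and only if its center Z(G) is both minimal (in the subspace topology) and a key subgroup of G. -/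
open Topology

section Aux

open Filter Set Pointwise

/-- The center of a Hausdorff topological group is closed. -/
lemma aux_isClosed_center {G : Type*} [Group G] [TopologicalSpace G] [IsTopologicalGroup G]
    [T2Space G] : IsClosed ((Subgroup.center G : Set G)) := by
  have h : (Subgroup.center G : Set G) = ⋂ g : G, {x : G | g * x = x * g} := by
    ext x
    simp [Subgroup.mem_center_iff, Set.mem_iInter]
  rw [h]
  exact isClosed_iInter fun g =>
    isClosed_eq (continuous_const.mul continuous_id) (continuous_id.mul continuous_const)

/-- If every neighborhood of `1` contains a point `u` with `u * v = x` for some `v ∈ S`,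
then `x` is in the closure of `S`. -/
lemma aux_mem_closure_of_forall {G : Type*} [Group G] [TopologicalSpace G] [IsTopologicalGroup G]
    {x : G} {S : Set G} (h : ∀ U ∈ 𝓝 (1 : G), ∃ u ∈ U, ∃ v ∈ S, u * v = x) :
    x ∈ closure S := by
  rw [mem_closure_iff_nhds]
  intro W hW
  have hUmem : (fun u : G => u⁻¹ * x) ⁻¹' W ∈ 𝓝 (1 : G) := by
    apply ((continuous_inv.mul continuous_const).continuousAt).preimage_mem_nhds
    simpa using hW
  obtain ⟨u, hu, v, hv, huv⟩ := h _ hUmem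
  refine ⟨v, ?_, hv⟩
  have hveq : v = u⁻¹ * x := by rw [← huv]; group
  rw [hveq]
  exact hu

lemma aux_mem_center_of {G : Type*} [Group G] [TopologicalSpace G] [IsTopologicalGroup G]
    [T2Space G] {x : G}
    (h : x ∈ closure (Subtype.val '' (Set.univ : Set ↥(Subgroup.center G)))) :
    x ∈ Subgroup.center G := by
  have h2 : Subtype.val '' (Set.univ : Set ↥(Subgroup.center G)) ⊆
      (Subgroup.center G : Set G) := by
    rintro _ ⟨z, -, rfl⟩; exact z.2
  exact closure_minimal h2 aux_isClosed_center h

lemma aux_closure_coe {G : Type*} [Group G] (γ : TopologicalSpace G)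
    (τ : TopologicalSpace ↥(Subgroup.center G)) (hle : subTop γ (Subgroup.center G) ≤ τ)
    {V : Set ↥(Subgroup.center G)} {z : ↥(Subgroup.center G)}
    (h : (z : G) ∈ @closure G γ (Subtype.val '' V)) : z ∈ @closure _ τ V := by
  letI := γ
  have h1 : z ∈ @closure _ (subTop γ (Subgroup.center G)) V := by
    rw [show subTop γ (Subgroup.center G) = γ.induced Subtype.val from rfl]
    exact closure_induced.mpr h
  exact closure.mono hle h1

lemma aux_eq_one_of_mem_closure {H : Type*} [Group H] [TopologicalSpace H]
    [IsTopologicalGroup H] [T2Space H] {z : H} (h : ∀ V ∈ 𝓝 (1 : H), z ∈ closure V) :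
    z = 1 := by
  by_contra hne
  have h1 : ({z}ᶜ : Set H) ∈ 𝓝 (1 : H) :=
    isOpen_compl_singleton.mem_nhds (by simpa using Ne.symm hne)
  obtain ⟨s, hs, hscl, hssub⟩ := exists_mem_nhds_isClosed_subset h1
  have h2 := h s hs
  rw [hscl.closure_eq] at h2
  exact hssub h2 rfl

variable {G : Type*} [Group G]

/-- The group filter basis on `G` of sets `U * V`, where `U` is a `γ`-neighborhood of `1`
in `G` and `V` is a `τ`-neighborhood of `1` in the center (viewed inside `G`). -/
def centerBasis (γ : TopologicalSpace G) (τ : TopologicalSpace ↥(Subgroup.center G))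
    (hγ : @IsTopologicalGroup G γ _) (htg : @IsTopologicalGroup ↥(Subgroup.center G) τ _) :
    GroupFilterBasis G := by
  letI := γ
  letI := τ
  haveI := hγ
  haveI := htg
  have comm : ∀ (v : ↥(Subgroup.center G)) (g : G), g * (v : G) = (v : G) * g := fun v g =>
    Subgroup.mem_center_iff.mp v.2 g
  refine
    { sets := {s | ∃ U ∈ @nhds G γ 1, ∃ V ∈ @nhds ↥(Subgroup.center G) τ 1,
        s = U * (Subtype.val '' V)}
      nonempty := ⟨Set.univ * (Subtype.val '' Set.univ), Set.univ, univ_mem, Set.univ,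
        univ_mem, rfl⟩
      inter_sets := ?_
      one' := ?_
      mul' := ?_
      inv' := ?_
      conj' := ?_ }
  · rintro _ _ ⟨U₁, hU₁, V₁, hV₁, rfl⟩ ⟨U₂, hU₂, V₂, hV₂, rfl⟩
    refine ⟨(U₁ ∩ U₂) * (Subtype.val '' (V₁ ∩ V₂)),
      ⟨_, inter_mem hU₁ hU₂, _, inter_mem hV₁ hV₂, rfl⟩, ?_⟩
    rintro x ⟨u, hu, _, ⟨z, hz, rfl⟩, rfl⟩
    exact ⟨⟨u, hu.1, z, ⟨z, hz.1, rfl⟩, rfl⟩, ⟨u, hu.2, z, ⟨z, hz.2, rfl⟩, rfl⟩⟩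
  · rintro _ ⟨U, hU, V, hV, rfl⟩
    exact ⟨1, mem_of_mem_nhds hU, 1, ⟨1, mem_of_mem_nhds hV, rfl⟩, mul_one 1⟩
  · rintro _ ⟨U, hU, V, hV, rfl⟩
    obtain ⟨U₀, hU₀o, hU₀1, hU₀⟩ := exists_open_nhds_one_mul_subset hU
    obtain ⟨V₀, hV₀o, hV₀1, hV₀⟩ := exists_open_nhds_one_mul_subset hV
    refine ⟨U₀ * (Subtype.val '' V₀),
      ⟨_, hU₀o.mem_nhds hU₀1, _, hV₀o.mem_nhds hV₀1, rfl⟩, ?_⟩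
    rintro x ⟨_, ⟨u₁, hu₁, _, ⟨z₁, hz₁, rfl⟩, rfl⟩, _, ⟨u₂, hu₂, _, ⟨z₂, hz₂, rfl⟩, rfl⟩, rfl⟩
    refine ⟨u₁ * u₂, hU₀ (mul_mem_mul hu₁ hu₂),
      ((z₁ * z₂ : ↥(Subgroup.center G)) : G), ⟨z₁ * z₂, hV₀ (mul_mem_mul hz₁ hz₂), rfl⟩, ?_⟩
    show u₁ * u₂ * ((z₁ * z₂ : ↥(Subgroup.center G)) : G) = u₁ * (z₁ : G) * (u₂ * (z₂ : G))
    push_cast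
    calc u₁ * u₂ * ((z₁ : G) * (z₂ : G)) = u₁ * (u₂ * (z₁ : G)) * (z₂ : G) := by
          simp [mul_assoc]
      _ = u₁ * ((z₁ : G) * u₂) * (z₂ : G) := by rw [comm z₁ u₂]
      _ = u₁ * (z₁ : G) * (u₂ * (z₂ : G)) := by simp [mul_assoc]
  · rintro _ ⟨U, hU, V, hV, rfl⟩
    refine ⟨U⁻¹ * (Subtype.val '' V⁻¹),
      ⟨_, inv_mem_nhds_one G hU, _, inv_mem_nhds_one ↥(Subgroup.center G) hV, rfl⟩, ?_⟩
    rintro x ⟨u, hu, _, ⟨z, hz, rfl⟩, rfl⟩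
    show (u * (z : G))⁻¹ ∈ U * (Subtype.val '' V)
    refine ⟨u⁻¹, Set.mem_inv.mp hu, ((z⁻¹ : ↥(Subgroup.center G)) : G),
      ⟨z⁻¹, Set.mem_inv.mp hz, rfl⟩, ?_⟩
    show u⁻¹ * ((z⁻¹ : ↥(Subgroup.center G)) : G) = (u * (z : G))⁻¹
    have h := comm z⁻¹ u⁻¹
    push_cast at h ⊢
    rw [mul_inv_rev]
    exact h
  · intro x₀
    rintro _ ⟨U, hU, V, hV, rfl⟩
    have hcont : Continuous fun u : G => x₀ * u * x₀⁻¹ :=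
      (continuous_const.mul continuous_id).mul continuous_const
    have hU' : (fun u : G => x₀ * u * x₀⁻¹) ⁻¹' U ∈ @nhds G γ 1 := by
      apply hcont.continuousAt.preimage_mem_nhds
      simpa using hU
    refine ⟨((fun u : G => x₀ * u * x₀⁻¹) ⁻¹' U) * (Subtype.val '' V),
      ⟨_, hU', _, hV, rfl⟩, ?_⟩
    rintro x ⟨u, hu, _, ⟨z, hz, rfl⟩, rfl⟩
    show x₀ * (u * (z : G)) * x₀⁻¹ ∈ U * (Subtype.val '' V)
    refine ⟨x₀ * u * x₀⁻¹, hu, (z : G), ⟨z, hz, rfl⟩, ?_⟩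
    show x₀ * u * x₀⁻¹ * (z : G) = x₀ * (u * (z : G)) * x₀⁻¹
    calc x₀ * u * x₀⁻¹ * (z : G) = x₀ * u * (x₀⁻¹ * (z : G)) := by simp [mul_assoc]
      _ = x₀ * u * ((z : G) * x₀⁻¹) := by rw [comm z x₀⁻¹]
      _ = x₀ * (u * (z : G)) * x₀⁻¹ := by simp [mul_assoc]

lemma mem_centerBasis_iff {γ : TopologicalSpace G}
    {τ : TopologicalSpace ↥(Subgroup.center G)} {hγ : @IsTopologicalGroup G γ _}
    {htg : @IsTopologicalGroup ↥(Subgroup.center G) τ _} {s : Set G} :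
    s ∈ centerBasis γ τ hγ htg ↔ ∃ U ∈ @nhds G γ 1, ∃ V ∈ @nhds ↥(Subgroup.center G) τ 1,
      s = U * (Subtype.val '' V) := Iff.rfl

lemma centerBasis_le (γ : TopologicalSpace G) (τ : TopologicalSpace ↥(Subgroup.center G))
    (hγ : @IsTopologicalGroup G γ _) (htg : @IsTopologicalGroup ↥(Subgroup.center G) τ _) :
    γ ≤ (centerBasis γ τ hγ htg).topology := by
  letI := γ
  haveI := hγ
  set B := centerBasis γ τ hγ htg with hB
  rw [le_iff_nhds]
  intro x
  rw [B.nhds_eq]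
  refine (B.hasBasis x).ge_iff.mpr ?_
  intro b hb
  obtain ⟨U, hU, V, hV, rfl⟩ := mem_centerBasis_iff.mp hb
  have h1 : U ⊆ U * (Subtype.val '' V) := fun u hu =>
    ⟨u, hu, (1 : G), ⟨1, mem_of_mem_nhds hV, rfl⟩, mul_one u⟩
  have h2 : (fun y => x * y) '' U ∈ @nhds G γ x := by
    rw [← map_mul_left_nhds_one x]
    exact image_mem_map hU
  exact mem_of_superset h2 (Set.image_mono h1)

lemma centerBasis_t2 (γ : TopologicalSpace G) (τ : TopologicalSpace ↥(Subgroup.center G))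
    (hγ : @IsTopologicalGroup G γ _) (hT2 : @T2Space G γ)
    (htg : @IsTopologicalGroup ↥(Subgroup.center G) τ _)
    (ht2 : @T2Space ↥(Subgroup.center G) τ) (hle : subTop γ (Subgroup.center G) ≤ τ) :
    @T2Space G (centerBasis γ τ hγ htg).topology := by
  letI := τ
  haveI := htg
  haveI := ht2
  set B := centerBasis γ τ hγ htg with hB
  letI := B.topology
  haveI : IsTopologicalGroup G := B.isTopologicalGroup
  have hclosed : IsClosed ({1} : Set G) := by
    apply isClosed_of_closure_subset
    intro x hx
    have hx' := (mem_closure_iff_nhds_basis (B.nhds_hasBasis x)).mp hx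
    -- `x⁻¹` lies in every basic set `U * V`
    have key : ∀ U ∈ @nhds G γ 1, ∀ V ∈ @nhds ↥(Subgroup.center G) τ 1,
        ∃ u ∈ U, ∃ v ∈ Subtype.val '' V, u * v = x⁻¹ := by
      intro U hU V hV
      obtain ⟨y, hy1, w, hw, hxw⟩ := hx' _ (mem_centerBasis_iff.mpr ⟨U, hU, V, hV, rfl⟩)
      rw [Set.mem_singleton_iff] at hy1
      rw [hy1] at hxw
      have hwx : w = x⁻¹ := eq_inv_of_mul_eq_one_right hxw
      obtain ⟨u, hu, v, hv, huv⟩ := hw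
      exact ⟨u, hu, v, hv, huv.trans hwx⟩
    -- hence `x⁻¹` is in the `γ`-closure of `V` for every `V`
    have cl : ∀ V ∈ @nhds ↥(Subgroup.center G) τ 1,
        x⁻¹ ∈ @closure G γ (Subtype.val '' V) := fun V hV =>
      @aux_mem_closure_of_forall G _ γ hγ _ _ (fun U hU => key U hU V hV)
    have hxZ : x⁻¹ ∈ Subgroup.center G :=
      @aux_mem_center_of G _ γ hγ hT2 _ (cl _ univ_mem)
    have clτ : ∀ V ∈ @nhds ↥(Subgroup.center G) τ 1,
        (⟨x⁻¹, hxZ⟩ : ↥(Subgroup.center G)) ∈ @closure _ τ V := fun V hV =>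
      aux_closure_coe γ τ hle (cl V hV)
    have hz1 : (⟨x⁻¹, hxZ⟩ : ↥(Subgroup.center G)) = 1 := aux_eq_one_of_mem_closure clτ
    have hx1 : x⁻¹ = (1 : G) := congrArg Subtype.val hz1
    simp only [Set.mem_singleton_iff]
    rw [← inv_inv x, hx1, inv_one]
  exact (IsTopologicalGroup.t2Space_iff_one_closed (G := G)).mpr hclosed

/-- The center of a minimal Hausdorff group is minimal in the subspace topology. -/
lemma aux_center_minimal (γ : TopologicalSpace G)
    (hγ : @IsTopologicalGroup G γ _) (hT2 : @T2Space G γ) (hmin : IsMinimalGroup γ) :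
    IsMinimalGroup (subTop γ (Subgroup.center G)) := by
  letI := γ
  haveI := hγ
  haveI := hT2
  have tgZ : @IsTopologicalGroup ↥(Subgroup.center G) (subTop γ (Subgroup.center G)) _ := by
    show @IsTopologicalGroup ↥(Subgroup.center G) (γ.induced _) _
    exact inferInstance
  intro τ hle htg ht2
  set B := centerBasis γ τ hγ htg with hB
  have hEq : B.topology = γ :=
    hmin B.topology (centerBasis_le γ τ hγ htg) B.isTopologicalGroup
      (centerBasis_t2 γ τ hγ hT2 htg ht2 hle)
  have hnn : @nhds G γ 1 = B.toFilterBasis.filter := by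
    rw [← hEq]
    exact B.nhds_one_eq
  refine IsTopologicalGroup.ext htg tgZ ?_
  have hsub : @nhds ↥(Subgroup.center G) (subTop γ (Subgroup.center G)) 1 =
      Filter.comap Subtype.val (@nhds G γ 1) := by
    rw [show subTop γ (Subgroup.center G) = γ.induced Subtype.val from rfl, nhds_induced]
    simp
  rw [hsub]
  refine le_antisymm ?_ ?_
  · intro s hs
    obtain ⟨U, hU, hUs⟩ := Filter.mem_comap.mp hs
    rw [hnn, B.toFilterBasis.mem_filter_iff] at hU
    obtain ⟨b, hb, hbU⟩ := hU
    obtain ⟨U₀, hU₀, V₀, hV₀, rfl⟩ := mem_centerBasis_iff.mp hb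
    have hsubset : V₀ ⊆ Subtype.val ⁻¹' U := fun v hv =>
      hbU ⟨1, mem_of_mem_nhds hU₀, (v : G), ⟨v, hv, rfl⟩, one_mul _⟩
    exact Filter.mem_of_superset hV₀ (Set.Subset.trans hsubset hUs)
  · rw [← hsub]
    exact nhds_mono hle

end Aux

/-- `G` is minimal iff its center is a minimal (in the subspace topology) key subgroup. -/
theorem minimal_iff_center_minimal_key {G : Type*} [Group G] (γ : TopologicalSpace G)
    (hγ : @IsTopologicalGroup G γ _) (hT2 : @T2Space G γ) :
    IsMinimalGroup γ ↔
      IsMinimalGroup (subTop γ (Subgroup.center G)) ∧ IsKey γ (Subgroup.center G) := by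
  constructor
  · intro hmin
    refine ⟨aux_center_minimal γ hγ hT2 hmin, ?_⟩
    intro γ₁ hle htg ht2 _
    exact hmin γ₁ hle htg ht2
  · rintro ⟨hZmin, hkey⟩ γ₁ hle htg ht2
    have hsle : subTop γ (Subgroup.center G) ≤ subTop γ₁ (Subgroup.center G) :=
      induced_mono hle
    have htgZ : @IsTopologicalGroup ↥(Subgroup.center G) (subTop γ₁ (Subgroup.center G)) _ := by
      letI := γ₁
      haveI := htg
      show @IsTopologicalGroup ↥(Subgroup.center G) (γ₁.induced _) _
      exact inferInstance
    have ht2Z : @T2Space ↥(Subgroup.center G) (subTop γ₁ (Subgroup.center G)) := by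
      letI := γ₁
      haveI := ht2
      show @T2Space ↥(Subgroup.center G) (γ₁.induced _)
      exact inferInstance
    have heq := hZmin _ hsle htgZ ht2Z
    exact hkey γ₁ hle htg ht2 heq
end

section
/- Every co-minimal subgroup of a Hausdorff topological group G is a key subgroup of G. -/
open Topology

open Pointwise in
theorem merson {G : Type*} [Group G] (γ γ₁ : TopologicalSpace G)
    (hle : γ ≤ γ₁) (hg : @IsTopologicalGroup G γ _) (hg₁ : @IsTopologicalGroup G γ₁ _)
    (H : Subgroup G)
    (hsub : subTop γ₁ H = subTop γ H) (hquot : quotTop γ₁ H = quotTop γ H) :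
    γ₁ = γ := by
  have key : ∀ U ∈ @nhds G γ 1, U ∈ @nhds G γ₁ 1 := by
    intro U hU
    obtain ⟨V, Vo, V1, hVU⟩ : ∃ V : Set G, @IsOpen G γ V ∧ (1 : G) ∈ V ∧ V * V ⊆ U := by
      letI := γ; exact exists_open_nhds_one_mul_subset hU
    have hnh : Filter.comap ((↑) : H → G) (@nhds G γ₁ 1) =
        Filter.comap ((↑) : H → G) (@nhds G γ 1) := by
      have h1 : @nhds H (subTop γ₁ H) 1 = Filter.comap ((↑) : H → G) (@nhds G γ₁ 1) :=
        @nhds_induced G H γ₁ ((↑) : H → G) 1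
      have h2 : @nhds H (subTop γ H) 1 = Filter.comap ((↑) : H → G) (@nhds G γ 1) :=
        @nhds_induced G H γ ((↑) : H → G) 1
      rw [← h1, ← h2, hsub]
    have hVc : ((↑) : H → G) ⁻¹' V ∈ Filter.comap ((↑) : H → G) (@nhds G γ₁ 1) := by
      rw [hnh]
      exact Filter.preimage_mem_comap (@IsOpen.mem_nhds G γ 1 V Vo V1)
    obtain ⟨W, hW, hWV⟩ := Filter.mem_comap.mp hVc
    obtain ⟨W₂, W₂o, W₂1, hW₂⟩ : ∃ V : Set G, @IsOpen G γ₁ V ∧ (1 : G) ∈ V ∧ V * V ⊆ W := by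
      letI := γ₁; exact exists_open_nhds_one_mul_subset hW
    set W₁ : Set G := W₂ ∩ W₂⁻¹ with hW₁def
    have W₁o : @IsOpen G γ₁ W₁ := by
      letI := γ₁; exact W₂o.inter W₂o.inv
    have W₁1 : (1 : G) ∈ W₁ := ⟨W₂1, by simpa using W₂1⟩
    set A : Set G := V ∩ W₁ with hAdef
    have Ao : @IsOpen G γ A := by
      letI := γ; exact Vo.inter (hle _ W₁o)
    have A1 : (1 : G) ∈ A := ⟨V1, W₁1⟩
    have hsat : @IsOpen G γ ((QuotientGroup.mk : G → G ⧸ H) ⁻¹'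
        ((QuotientGroup.mk : G → G ⧸ H) '' A)) := by
      letI := γ
      rw [QuotientGroup.preimage_image_mk]
      exact isOpen_iUnion fun x => Ao.preimage (continuous_mul_right (x : G))
    have hsat₁ : @IsOpen G γ₁ ((QuotientGroup.mk : G → G ⧸ H) ⁻¹'
        ((QuotientGroup.mk : G → G ⧸ H) '' A)) := by
      have hq : @IsOpen (G ⧸ H) (quotTop γ H) ((QuotientGroup.mk : G → G ⧸ H) '' A) :=
        (isOpen_coinduced (t := γ)).mpr hsat
      rw [← hquot] at hq
      exact (isOpen_coinduced (t := γ₁)).mp hq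
    refine Filter.mem_of_superset
      (@IsOpen.mem_nhds G γ₁ 1 ((QuotientGroup.mk : G → G ⧸ H) ⁻¹'
          ((QuotientGroup.mk : G → G ⧸ H) '' A) ∩ W₁)
        (by letI := γ₁; exact hsat₁.inter W₁o) ⟨⟨1, A1, rfl⟩, W₁1⟩) ?_
    rintro x ⟨hxs, hxW₁⟩
    obtain ⟨a, haA, hax⟩ := hxs
    have hmem : a⁻¹ * x ∈ H := by
      rwa [QuotientGroup.eq] at hax
    have hinW : a⁻¹ * x ∈ W := by
      apply hW₂
      exact Set.mul_mem_mul haA.2.2 hxW₁.1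
    have hinV : a⁻¹ * x ∈ V := hWV (a := ⟨a⁻¹ * x, hmem⟩) hinW
    have : a * (a⁻¹ * x) ∈ U := hVU (Set.mul_mem_mul haA.1 hinV)
    simpa using this
  refine IsTopologicalGroup.ext hg₁ hg (le_antisymm ?_ ?_)
  · exact Filter.le_def.mpr key
  · exact nhds_mono hle

/-- Every co-minimal subgroup is a key subgroup. -/
theorem isKey_of_isCoMin {G : Type*} [Group G] (γ : TopologicalSpace G)
    (hγ : @IsTopologicalGroup G γ _) (hT2 : @T2Space G γ)
    (H : Subgroup G) (h : IsCoMin γ H) :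
    IsKey γ H := fun γ₁ hle hg₁ hT2 hsub =>
  merson γ γ₁ hle hγ hg₁ H hsub (h γ₁ hle hg₁ hT2)
end

section
/- Every relatively minimal subgroup of a Hausdorff topological group G is a co-key subgroup of G. -/
open Topology Pointwise

section helpers
variable {G : Type*} [Group G] [TopologicalSpace G] [IsTopologicalGroup G]

lemma helperA {U : Set G} (hU : U ∈ 𝓝 (1 : G)) :
    ∃ V : Set G, IsOpen V ∧ (1 : G) ∈ V ∧ V * V ⊆ U :=
  exists_open_nhds_one_mul_subset hU

lemma helperC {O : Set G} (hO : IsOpen O) (h1 : (1 : G) ∈ O) :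
    ∃ W : Set G, IsOpen W ∧ (1 : G) ∈ W ∧ ∀ a ∈ W, ∀ b ∈ W, a⁻¹ * b ∈ O := by
  have hc : Continuous fun p : G × G => p.1⁻¹ * p.2 :=
    (continuous_fst.inv).mul continuous_snd
  have hop : IsOpen ((fun p : G × G => p.1⁻¹ * p.2) ⁻¹' O) := hO.preimage hc
  have hmem : ((1 : G), (1 : G)) ∈ (fun p : G × G => p.1⁻¹ * p.2) ⁻¹' O := by
    simp [h1]
  obtain ⟨W₁, W₂, h1o, h2o, h1m, h2m, hsub⟩ := isOpen_prod_iff.1 hop 1 1 hmem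
  refine ⟨W₁ ∩ W₂, h1o.inter h2o, ⟨h1m, h2m⟩, fun a ha b hb => ?_⟩
  have : (a, b) ∈ W₁ ×ˢ W₂ := Set.mem_prod.2 ⟨ha.1, hb.2⟩
  exact hsub this

lemma helperB {A : Set G} (hA : IsOpen A) (H : Subgroup G) :
    IsOpen (A * (H : Set G)) := hA.mul_right
end helpers

lemma merging {G : Type*} [Group G] (γ γ₁ : TopologicalSpace G)
    (hγ : @IsTopologicalGroup G γ _) (hTG : @IsTopologicalGroup G γ₁ _)
    (hle : γ ≤ γ₁) (H : Subgroup G)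
    (hsub : subTop γ₁ H = subTop γ H) (hquot : quotTop γ₁ H = quotTop γ H) :
    γ₁ = γ := by
  refine @IsTopologicalGroup.ext G _ γ₁ γ hTG hγ ?_
  refine le_antisymm (fun U hU => ?_) (nhds_mono hle)
  -- hU : U ∈ @nhds G γ 1, goal : U ∈ @nhds G γ₁ 1
  obtain ⟨V, Vopen, V1, VV⟩ := @helperA G _ γ hγ U hU
  -- transfer V ∩ H openness to γ₁
  have hVH : @IsOpen H (subTop γ₁ H) (Subtype.val ⁻¹' V) := by
    rw [hsub]; exact ⟨V, Vopen, rfl⟩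
  obtain ⟨O, Oopen, hO⟩ := hVH
  have O1 : (1 : G) ∈ O := by
    have h1V : (1 : H) ∈ Subtype.val ⁻¹' V := by
      simp [Set.mem_preimage, V1]
    have : (1 : H) ∈ Subtype.val ⁻¹' O := by rw [hO]; exact h1V
    simpa using this
  obtain ⟨W, Wopen, W1, hW⟩ := @helperC G _ γ₁ hTG O Oopen O1
  have hWγ : @IsOpen G γ W := hle W Wopen
  have hAopen : @IsOpen G γ (W ∩ V) := @IsOpen.inter G γ _ _ hWγ Vopen
  have hSat : ((QuotientGroup.mk : G → G ⧸ H) ⁻¹'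
      (QuotientGroup.mk '' (W ∩ V)) : Set G) = (W ∩ V) * (H : Set G) := by
    ext x
    simp only [Set.mem_preimage, Set.mem_image, Set.mem_mul]
    constructor
    · rintro ⟨a, ha, hax⟩
      exact ⟨a, ha, a⁻¹ * x, QuotientGroup.eq.1 hax, mul_inv_cancel_left a x⟩
    · rintro ⟨a, ha, b, hb, rfl⟩
      exact ⟨a, ha, QuotientGroup.eq.2 (by simpa using hb)⟩
  have hγopen : @IsOpen G γ ((W ∩ V) * (H : Set G)) := @helperB G _ γ hγ _ hAopen H
  have hQopen : @IsOpen (G ⧸ H) (quotTop γ H)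
      ((QuotientGroup.mk : G → G ⧸ H) '' (W ∩ V)) := by
    show @IsOpen G γ _
    rw [hSat]; exact hγopen
  rw [← hquot] at hQopen
  have hSopen : @IsOpen G γ₁ ((QuotientGroup.mk : G → G ⧸ H) ⁻¹'
      (QuotientGroup.mk '' (W ∩ V))) := hQopen
  have hNopen : @IsOpen G γ₁ (W ∩ (QuotientGroup.mk : G → G ⧸ H) ⁻¹'
      (QuotientGroup.mk '' (W ∩ V))) := @IsOpen.inter G γ₁ _ _ Wopen hSopen
  have hN1 : (1 : G) ∈ W ∩ (QuotientGroup.mk : G → G ⧸ H) ⁻¹'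
      (QuotientGroup.mk '' (W ∩ V)) :=
    ⟨W1, Set.mem_image_of_mem _ ⟨W1, V1⟩⟩
  have hNU : W ∩ (QuotientGroup.mk : G → G ⧸ H) ⁻¹'
      (QuotientGroup.mk '' (W ∩ V)) ⊆ U := by
    rintro x ⟨hxW, hxS⟩
    obtain ⟨a, ⟨haW, haV⟩, hax⟩ := hxS
    have hmem : a⁻¹ * x ∈ H := QuotientGroup.eq.1 hax
    have hO' : a⁻¹ * x ∈ O := hW a haW x hxW
    have hpre : (⟨a⁻¹ * x, hmem⟩ : H) ∈ Subtype.val ⁻¹' O := hO'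
    have hV' : a⁻¹ * x ∈ V := by
      rw [hO] at hpre; exact hpre
    have : a * (a⁻¹ * x) ∈ U := VV (Set.mul_mem_mul haV hV')
    simpa using this
  exact Filter.mem_of_superset (hNopen.mem_nhds hN1) hNU

/-- Every relatively minimal subgroup is a co-key subgroup. -/
theorem isCoKey_of_isRelMin {G : Type*} [Group G] (γ : TopologicalSpace G)
    (hγ : @IsTopologicalGroup G γ _) (hT2 : @T2Space G γ)
    (H : Subgroup G) (h : IsRelMin γ H) :
    IsCoKey γ H := by
  intro γ₁ hle hTG hT2' hquot
  exact merging γ γ₁ hγ hTG hle H (h γ₁ hle hTG hT2') hquot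
end

section
/- A subgroup H of a Hausdorff topological group G is a key subgroup if and only if its closure cl(H) is a key subgroup of G. -/
open Topology

/-- Restriction of a subspace-topology equality to a smaller subgroup. -/
theorem subTop_eq_of_le {G : Type*} [Group G] {t t' : TopologicalSpace G}
    {H K : Subgroup G} (hHK : H ≤ K) (h : subTop t K = subTop t' K) :
    subTop t H = subTop t' H := by
  have key : ∀ s : TopologicalSpace G,
      subTop s H = (subTop s K).induced (Subgroup.inclusion hHK) := by
    intro s
    rw [subTop, subTop, induced_compose]
    rfl
  rw [key t, key t', h]

theorem nhds_subTop {G : Type*} [Group G] (t : TopologicalSpace G) (K : Subgroup G) :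
    @nhds K (subTop t K) 1 = Filter.comap ((↑) : K → G) (@nhds G t 1) := by
  rw [subTop, @nhds_induced]
  rfl

/-- In any topology, a neighborhood contains an open neighborhood. -/
theorem exists_open_nhds_subset {X : Type*} (t : TopologicalSpace X) {W : Set X} {x : X}
    (hW : W ∈ @nhds X t x) :
    ∃ W', @IsOpen X t W' ∧ W' ∈ @nhds X t x ∧ W' ⊆ W := by
  letI := t
  exact ⟨interior W, isOpen_interior, interior_mem_nhds.2 hW, interior_subset⟩

/-- The dense-extension lemma: if two group topologies (one coarser) induce the same
topology on `H`, they induce the same topology on the `γ`-closure of `H`. -/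
theorem subTop_closure_eq {G : Type*} [Group G] {γ γ₁ : TopologicalSpace G}
    (tgγ : @IsTopologicalGroup G γ _) (tgγ₁ : @IsTopologicalGroup G γ₁ _)
    (hle : γ ≤ γ₁) (H : Subgroup G)
    (h : subTop γ₁ H = subTop γ H) :
    subTop γ₁ (@Subgroup.topologicalClosure G γ _ tgγ H)
      = subTop γ (@Subgroup.topologicalClosure G γ _ tgγ H) := by
  set K := @Subgroup.topologicalClosure G γ _ tgγ H with hK
  have tg : ∀ (t : TopologicalSpace G), @IsTopologicalGroup G t _ →
      @IsTopologicalGroup K (subTop t K) _ := by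
    intro t ht
    letI := t
    haveI := ht
    exact (inferInstance : IsTopologicalGroup K)
  refine @IsTopologicalGroup.ext K _ (subTop γ₁ K) (subTop γ K) (tg _ tgγ₁) (tg _ tgγ) ?_
  rw [nhds_subTop, nhds_subTop]
  refine le_antisymm ?_ (Filter.comap_mono (nhds_mono hle))
  intro s hs
  rw [Filter.mem_comap] at hs ⊢
  obtain ⟨U, hU, hUs⟩ := hs
  letI := γ
  haveI := tgγ
  obtain ⟨V, hV, hVc, hVU⟩ := exists_mem_nhds_isClosed_subset hU
  have hnh : Filter.comap ((↑) : H → G) (@nhds G γ₁ 1)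
      = Filter.comap ((↑) : H → G) (@nhds G γ 1) := by
    rw [← nhds_subTop, ← nhds_subTop, h]
  have hVH : ((↑) : H → G) ⁻¹' V ∈ Filter.comap ((↑) : H → G) (@nhds G γ₁ 1) := by
    rw [hnh]; exact Filter.preimage_mem_comap hV
  obtain ⟨W, hW, hWV⟩ := Filter.mem_comap.1 hVH
  obtain ⟨W', hW'open, hW'nhds, hW'W⟩ := exists_open_nhds_subset γ₁ hW
  refine ⟨W', hW'nhds, ?_⟩
  refine subset_trans ?_ hUs
  intro x hx
  have hxK : (x : G) ∈ closure (H : Set G) := x.2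
  have hopen : IsOpen W' := hW'open.mono hle
  have hsubV : W' ∩ (H : Set G) ⊆ V := by
    rintro g ⟨hg1, hg2⟩
    exact hWV (show ((⟨g, hg2⟩ : H) : G) ∈ W from hW'W hg1)
  have hmem : (x : G) ∈ closure (W' ∩ (H : Set G)) :=
    hopen.inter_closure ⟨hx, hxK⟩
  exact hVU (hVc.closure_subset ((closure_mono hsubV) hmem))

/-- `H` is a key subgroup of `G` iff its closure is a key subgroup of `G`. -/
theorem isKey_iff_closure_isKey {G : Type*} [Group G] [γ : TopologicalSpace G]
    [IsTopologicalGroup G] [T2Space G] (H : Subgroup G) :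
    IsKey γ H ↔ IsKey γ H.topologicalClosure := by
  constructor
  · intro hkey γ₁ hle tg₁ t2 hsub
    exact hkey γ₁ hle tg₁ t2 (subTop_eq_of_le (@Subgroup.le_topologicalClosure G γ _ _ H) hsub)
  · intro hkey γ₁ hle tg₁ t2 hsub
    exact hkey γ₁ hle tg₁ t2 (subTop_closure_eq ‹_› tg₁ hle H hsub)
end

section
/- Let G ≤ H be subgroups of a Hausdorff topological group X. If H is a co-key subgroup of X, then G is a co-key subgroup of X. -/
open Topology

/-- The co-key property passes down to smaller subgroups: if `A ≤ B` are subgroups of `X`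
and `B` is co-key in `X`, then `A` is co-key in `X`. -/
theorem isCoKey_of_le {X : Type*} [Group X] (τ : TopologicalSpace X)
    (hτ : @IsTopologicalGroup X τ _) (hT2 : @T2Space X τ)
    (A B : Subgroup X) (hle : A ≤ B) (h : IsCoKey τ B) :
    IsCoKey τ A := by
  intro γ₁ hle1 htg ht2 hq
  apply h γ₁ hle1 htg ht2
  -- the natural factor map X ⧸ A → X ⧸ B
  let f : X ⧸ A → X ⧸ B := fun q =>
    Quotient.liftOn' q (QuotientGroup.mk : X → X ⧸ B) (by
      intro a b hab
      exact (QuotientGroup.eq).2 (hle ((QuotientGroup.leftRel_apply).1 hab)))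
  have key : ∀ t : TopologicalSpace X, quotTop t B = (quotTop t A).coinduced f := by
    intro t
    rw [quotTop, quotTop, coinduced_compose]
    rfl
  rw [key γ₁, key τ, hq]
end

section
/- Every nontrivial subgroup of the additive group of real numbers (with the usual topology) is a key subgroup of ℝ. -/
open Topology

/-- Subspace topology induced on an additive subgroup. -/
def subTopAdd {G : Type*} [AddGroup G] (t : TopologicalSpace G) (H : AddSubgroup G) :
    TopologicalSpace H :=
  t.induced ((↑) : H → G)

/-- `H` is a key subgroup of the additive topological group `(G, γ)`. -/
def IsKeyAdd {G : Type*} [AddGroup G] (γ : TopologicalSpace G) (H : AddSubgroup G) : Prop :=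
  ∀ γ₁ : TopologicalSpace G, γ ≤ γ₁ → @IsTopologicalAddGroup G γ₁ _ → @T2Space G γ₁ →
    subTopAdd γ₁ H = subTopAdd γ H → γ₁ = γ

open Set Pointwise

/-- The standard topology on `ℝ`. -/
abbrev stdR : TopologicalSpace ℝ := inferInstance

section StdFacts

private lemma stdTAG : @IsTopologicalAddGroup ℝ stdR _ := inferInstance

private lemma std_compact_Icc (a b : ℝ) : @IsCompact ℝ stdR (Icc a b) := isCompact_Icc

private lemma std_isOpen_Ioo (a b : ℝ) : @IsOpen ℝ stdR (Ioo a b) := isOpen_Ioo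

private lemma std_mem_nhds {U : Set ℝ} (hU : U ∈ @nhds ℝ stdR 0) :
    ∃ ε > (0 : ℝ), Ioo (-ε) ε ⊆ U := by
  obtain ⟨ε, hε, hb⟩ := Metric.mem_nhds_iff.mp hU
  exact ⟨ε, hε, by rwa [Real.ball_eq_Ioo, zero_sub, zero_add] at hb⟩

private lemma std_ball_subset {W : Set ℝ} (hW : @IsOpen ℝ stdR W) (h0 : (0 : ℝ) ∈ W) :
    ∃ δ > (0 : ℝ), Ioo (-δ) δ ⊆ W := by
  obtain ⟨δ, hδ, hb⟩ := Metric.isOpen_iff.mp hW 0 h0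
  exact ⟨δ, hδ, by rwa [Real.ball_eq_Ioo, zero_sub, zero_add] at hb⟩

private lemma std_dense_meet {s U : Set ℝ} (hd : @Dense ℝ stdR s) (hU : @IsOpen ℝ stdR U)
    (hne : U.Nonempty) : ∃ x ∈ s, x ∈ U :=
  hd.exists_mem_open hU hne

private lemma zmultiples_small (a : ℝ) (ha : 0 < a) {n : ℤ} (hn : n • a ∈ Ioo (-a) a) :
    n • a = 0 := by
  rcases lt_trichotomy n 0 with h | rfl | h
  · exfalso
    have h0 : n ≤ -1 := by omega
    have h1 : (n : ℝ) ≤ -1 := by exact_mod_cast h0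
    have h2 : (n : ℝ) * a ≤ -a := by nlinarith
    have := hn.1
    rw [zsmul_eq_mul] at this
    linarith
  · simp
  · exfalso
    have h1 : (1 : ℝ) ≤ (n : ℝ) := by exact_mod_cast h
    have h2 : a ≤ (n : ℝ) * a := by nlinarith
    have := hn.2
    rw [zsmul_eq_mul] at this
    linarith

private lemma zmultiples_neg_eq (a : ℝ) :
    AddSubgroup.zmultiples (-a) = AddSubgroup.zmultiples a := by
  ext x
  simp only [AddSubgroup.mem_zmultiples_iff]
  constructor <;> rintro ⟨n, rfl⟩ <;> exact ⟨-n, by simp [neg_zsmul, zsmul_neg]⟩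

end StdFacts

section Gamma1

-- NB: `γ₁` (and `tg`, `t2`) below become local *instances*, so inside this section the
-- ambient topology on `ℝ` is `γ₁`; the standard topology is referred to as `stdR`.
variable (γ₁ : TopologicalSpace ℝ)

private lemma compact_le (hle : stdR ≤ γ₁) {s : Set ℝ} (hs : @IsCompact ℝ stdR s) :
    IsCompact s := by
  have h : IsCompact (id '' s) :=
    @IsCompact.image ℝ ℝ stdR γ₁ s id hs (continuous_id_of_le hle)
  simpa using h

private lemma exists_open_agree {H : AddSubgroup ℝ}
    (heq : subTopAdd γ₁ H = subTopAdd stdR H)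
    {I : Set ℝ} (hI : @IsOpen ℝ stdR I) :
    ∃ O : Set ℝ, IsOpen O ∧ ∀ x ∈ H, (x ∈ O ↔ x ∈ I) := by
  have h1 : @IsOpen H (subTopAdd stdR H) (((↑) : H → ℝ) ⁻¹' I) := ⟨I, hI, rfl⟩
  rw [← heq] at h1
  obtain ⟨O, hO, hOI⟩ :
      ∃ O : Set ℝ, IsOpen O ∧ ((↑) : H → ℝ) ⁻¹' O = ((↑) : H → ℝ) ⁻¹' I := h1
  exact ⟨O, hO, fun x hx => Set.ext_iff.mp hOI ⟨x, hx⟩⟩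

private lemma open_singleton_add (tg : IsTopologicalAddGroup ℝ) {W : Set ℝ} (hW : IsOpen W) (x : ℝ) :
    IsOpen (({x} : Set ℝ) + W) := by
  have h1 : (({x} : Set ℝ) + W) = ((fun y => y - x) : ℝ → ℝ) ⁻¹' W := by
    ext y
    simp only [Set.mem_add, Set.mem_singleton_iff, Set.mem_preimage]
    constructor
    · rintro ⟨b, rfl, c, hc, rfl⟩
      simpa using hc
    · intro h
      exact ⟨x, rfl, y - x, h, by ring⟩
  rw [h1]
  exact hW.preimage (continuous_id.sub continuous_const)

private lemma mem_singleton_add {x y : ℝ} {W : Set ℝ} :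
    y ∈ ({x} : Set ℝ) + W ↔ y - x ∈ W := by
  rw [Set.singleton_add, Set.mem_image]
  constructor
  · rintro ⟨b, hb, rfl⟩
    simpa using hb
  · intro h
    exact ⟨y - x, h, by ring⟩

private lemma exists_sub_subset (tg : IsTopologicalAddGroup ℝ) {O : Set ℝ} (hO : IsOpen O) (h0 : (0 : ℝ) ∈ O) :
    ∃ W : Set ℝ, IsOpen W ∧ (0 : ℝ) ∈ W ∧ ∀ v ∈ W, ∀ w ∈ W, v - w ∈ O := by
  obtain ⟨V, hV, hVh⟩ := exists_nhds_zero_half (hO.mem_nhds h0)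
  obtain ⟨W₀, hW₀V, hW₀, h0W₀⟩ := mem_nhds_iff.mp hV
  refine ⟨W₀ ∩ (-W₀), hW₀.inter hW₀.neg, ⟨h0W₀, by simpa using h0W₀⟩, ?_⟩
  rintro v ⟨hv, -⟩ w ⟨-, hw⟩
  have : v + (-w) ∈ O := hVh v (hW₀V hv) (-w) (hW₀V hw)
  simpa [sub_eq_add_neg] using this

private lemma eq_std_of_small (tg : IsTopologicalAddGroup ℝ) (hle : stdR ≤ γ₁)
    (h : ∀ ε : ℝ, 0 < ε → ∃ W : Set ℝ, IsOpen W ∧ (0 : ℝ) ∈ W ∧ W ⊆ Ioo (-ε) ε) :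
    γ₁ = stdR := by
  refine IsTopologicalAddGroup.ext tg stdTAG ?_
  refine le_antisymm ?_ (nhds_mono hle)
  rw [Filter.le_def]
  intro U hU
  obtain ⟨ε, hε, hsub⟩ := std_mem_nhds hU
  obtain ⟨W, hW, h0, hWs⟩ := h ε hε
  exact Filter.mem_of_superset (hW.mem_nhds h0) fun x hx => hsub (hWs hx)

private lemma dense_case (tg : IsTopologicalAddGroup ℝ) (t2 : T2Space ℝ)
    (hle : stdR ≤ γ₁) (H : AddSubgroup ℝ)
    (hd : @Dense ℝ stdR (H : Set ℝ))
    (heq : subTopAdd γ₁ H = subTopAdd stdR H) :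
    ∀ ε : ℝ, 0 < ε → ∃ W : Set ℝ, IsOpen W ∧ (0 : ℝ) ∈ W ∧ W ⊆ Ioo (-ε) ε := by
  intro ε hε
  obtain ⟨O, hO, hOI⟩ := exists_open_agree γ₁ heq (std_isOpen_Ioo (-(ε/2)) (ε/2))
  have h0O : (0 : ℝ) ∈ O :=
    (hOI 0 H.zero_mem).mpr (Set.mem_Ioo.mpr ⟨by linarith, by linarith⟩)
  obtain ⟨V, hV, hVh⟩ := exists_nhds_zero_half (hO.mem_nhds h0O)
  obtain ⟨W, hWV, hW, h0W⟩ := mem_nhds_iff.mp hV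
  refine ⟨W, hW, h0W, ?_⟩
  intro w hw
  have hmem : w ∈ closure (O ∩ (H : Set ℝ)) := by
    rw [mem_closure_iff]
    intro o ho hwo
    have hXopen : IsOpen (({w} : Set ℝ) + W) := open_singleton_add γ₁ tg hW w
    have hwX : w ∈ ({w} : Set ℝ) + W := mem_singleton_add.mpr (by simpa using h0W)
    have hopen : @IsOpen ℝ stdR (o ∩ (({w} : Set ℝ) + W)) := hle _ (ho.inter hXopen)
    obtain ⟨h, hhH, hho, hhX⟩ := std_dense_meet hd hopen ⟨w, hwo, hwX⟩
    have hw' : h - w ∈ W := mem_singleton_add.mp hhX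
    have hO' : w + (h - w) ∈ O := hVh w (hWV hw) (h - w) (hWV hw')
    refine ⟨h, hho, ?_, hhH⟩
    simpa using hO'
  have hsub : O ∩ (H : Set ℝ) ⊆ Icc (-(ε/2)) (ε/2) := by
    rintro x ⟨hxO, hxH⟩
    exact Ioo_subset_Icc_self ((hOI x hxH).mp hxO)
  have hcl : IsClosed (Icc (-(ε/2)) (ε/2)) :=
    (compact_le γ₁ hle (std_compact_Icc _ _)).isClosed
  have hwIcc : w ∈ Icc (-(ε/2)) (ε/2) := closure_minimal hsub hcl hmem
  exact Set.mem_Ioo.mpr ⟨by linarith [hwIcc.1], by linarith [hwIcc.2]⟩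

private lemma cyclic_case (tg : IsTopologicalAddGroup ℝ) (t2 : T2Space ℝ)
    (hle : stdR ≤ γ₁) (a : ℝ) (ha : 0 < a)
    (heq : subTopAdd γ₁ (AddSubgroup.zmultiples a) =
      subTopAdd stdR (AddSubgroup.zmultiples a)) :
    ∀ ε : ℝ, 0 < ε → ∃ W : Set ℝ, IsOpen W ∧ (0 : ℝ) ∈ W ∧ W ⊆ Ioo (-ε) ε := by
  set H := AddSubgroup.zmultiples a with hHdef
  intro ε hε
  obtain ⟨O, hO, hOI⟩ := exists_open_agree γ₁ heq (std_isOpen_Ioo (-a) a)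
  have hOtriv : ∀ x ∈ H, x ∈ O → x = 0 := by
    intro x hx hxO
    obtain ⟨n, rfl⟩ := AddSubgroup.mem_zmultiples_iff.mp hx
    exact zmultiples_small a ha ((hOI _ hx).mp hxO)
  have h0O : (0 : ℝ) ∈ O :=
    (hOI 0 H.zero_mem).mpr (Set.mem_Ioo.mpr ⟨by linarith, ha⟩)
  obtain ⟨W, hW, h0W, hWsub⟩ := exists_sub_subset γ₁ tg hO h0O
  obtain ⟨δ, hδ, hballW⟩ := std_ball_subset (hle _ hW) h0W
  set δ' : ℝ := min δ (min ε (a / 2)) with hδ'def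
  have hδ'pos : 0 < δ' := lt_min hδ (lt_min hε (by linarith))
  have hδ'δ : δ' ≤ δ := min_le_left _ _
  have hδ'ε : δ' ≤ ε := le_trans (min_le_right _ _) (min_le_left _ _)
  have hδ'a : δ' ≤ a / 2 := le_trans (min_le_right _ _) (min_le_right _ _)
  have hIooW : Ioo (-δ') δ' ⊆ W := fun x hx =>
    hballW ⟨lt_of_le_of_lt (neg_le_neg hδ'δ) hx.1, lt_of_lt_of_le hx.2 hδ'δ⟩
  -- `H` is `γ₁`-closed
  have hHclosed : IsClosed (H : Set ℝ) := by
    rw [← closure_subset_iff_isClosed]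
    intro x hx
    rw [mem_closure_iff] at hx
    have hXopen : IsOpen (({x} : Set ℝ) + W) := open_singleton_add γ₁ tg hW x
    have hxX : x ∈ ({x} : Set ℝ) + W := mem_singleton_add.mpr (by simpa using h0W)
    obtain ⟨h, hhX, hhH⟩ := hx (({x} : Set ℝ) + W) hXopen hxX
    have hwW : h - x ∈ W := mem_singleton_add.mp hhX
    have hxh : x ∈ closure ({h} : Set ℝ) := by
      rw [mem_closure_iff]
      intro o ho hxo
      obtain ⟨h', ⟨h'o, h'X⟩, h'H⟩ := hx (o ∩ (({x} : Set ℝ) + W)) (ho.inter hXopen) ⟨hxo, hxX⟩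
      have hw'W : h' - x ∈ W := mem_singleton_add.mp h'X
      have hdiff : h - h' ∈ O := by
        have h5 : (h - x) - (h' - x) ∈ O := hWsub _ hwW _ hw'W
        simpa using h5
      have hz : h - h' = 0 :=
        hOtriv _ (AddSubgroup.sub_mem _ hhH h'H) hdiff
      have hh' : h' = h := by linarith [sub_eq_zero.mp hz]
      exact ⟨h', h'o, by simp [hh']⟩
    rw [closure_singleton, mem_singleton_iff] at hxh
    rw [hxh]
    exact hhH
  -- a closed set staying away from `0`
  set S : Set ℝ := Icc (δ' / 2) (a - δ' / 2) + (H : Set ℝ) with hSdef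
  have hSclosed : IsClosed S := by
    rw [hSdef]
    exact hHclosed.add_left_of_isCompact (compact_le γ₁ hle (std_compact_Icc _ _))
  have h0S : (0 : ℝ) ∉ S := by
    rintro ⟨c, hc, h, hh, hch⟩
    obtain ⟨n, rfl⟩ := AddSubgroup.mem_zmultiples_iff.mp hh
    have hch' : c + n • a = 0 := hch
    have h1 : n • a = -c := by linarith
    have h2 : n • a ∈ Ioo (-a) a := by
      rw [h1]
      exact ⟨by have := hc.2; simp only [neg_lt_neg_iff]; linarith,
        by have := hc.1; linarith⟩
    have h3 := zmultiples_small a ha h2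
    rw [h3] at h1
    have := hc.1
    linarith
  refine ⟨W ∩ Sᶜ, hW.inter hSclosed.isOpen_compl, ⟨h0W, h0S⟩, ?_⟩
  rintro w ⟨hwW, hwS⟩
  obtain ⟨m, hm, -⟩ := existsUnique_add_zsmul_mem_Ico ha w (-(δ' / 2))
  set r : ℝ := w + m • a with hrdef
  have hr2 : r < δ' / 2 := by
    by_contra hcon
    push_neg at hcon
    refine hwS ⟨r, ⟨hcon, ?_⟩, (-m) • a,
      AddSubgroup.zsmul_mem _ (AddSubgroup.mem_zmultiples a) _, ?_⟩
    · have := hm.2; linarith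
    · simp [hrdef, neg_zsmul]
  have hrIoo : r ∈ Ioo (-δ') δ' := ⟨by have := hm.1; linarith, by linarith⟩
  have hrW : r ∈ W := hIooW hrIoo
  have hsub : w - r ∈ O := hWsub w hwW r hrW
  have hsubH : w - r ∈ H := by
    have h4 : w - r = (-m) • a := by simp only [hrdef, neg_zsmul]; ring
    rw [h4]
    exact AddSubgroup.zsmul_mem _ (AddSubgroup.mem_zmultiples a) _
  have hz : w - r = 0 := hOtriv _ hsubH hsub
  have hwr : w = r := by linarith
  rw [hwr]
  exact ⟨lt_of_le_of_lt (neg_le_neg hδ'ε) hrIoo.1, lt_of_lt_of_le hrIoo.2 hδ'ε⟩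

end Gamma1

/-- Every nontrivial subgroup of `ℝ` (with the usual topology) is a key subgroup. -/
theorem real_nontrivial_subgroup_isKey (H : AddSubgroup ℝ) (hH : H ≠ ⊥) :
    IsKeyAdd (inferInstance : TopologicalSpace ℝ) H := by
  have hdc := AddSubgroup.dense_or_cyclic H
  intro γ₁ hle tg t2 heq
  rcases hdc with hd | ⟨a, rfl⟩
  · exact eq_std_of_small γ₁ tg hle (dense_case γ₁ tg t2 hle H hd heq)
  · rw [← AddSubgroup.zmultiples_eq_closure] at heq hH
    have ha : a ≠ 0 := by
      rintro rfl
      exact hH (by ext x; simp [AddSubgroup.mem_zmultiples_iff])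
    rcases ha.lt_or_gt with hneg | hpos
    · rw [← zmultiples_neg_eq a] at heq
      exact eq_std_of_small γ₁ tg hle (cyclic_case γ₁ tg t2 hle (-a) (by linarith) heq)
    · exact eq_std_of_small γ₁ tg hle (cyclic_case γ₁ tg t2 hle a hpos heq)
end

section
/- A normal subgroup H of a Hausdorff topological group (G, τ) is a co-key subgroup of G if and only if H is relatively minimal in G. -/
open Topology

open TopologicalSpace Pointwise

/-- Merging lemma: a coarser group topology inducing the same subspace topology on `H`
and the same quotient topology on `G ⧸ H` must coincide with the original one. -/
theorem merge_aux {G : Type*} [Group G] {τ γ₁ : TopologicalSpace G}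
    (hτ : @IsTopologicalGroup G τ _) (hg : @IsTopologicalGroup G γ₁ _)
    (hle : τ ≤ γ₁) (H : Subgroup G)
    (hsub : subTop γ₁ H = subTop τ H) (hquot : quotTop γ₁ H = quotTop τ H) :
    γ₁ = τ := by
  refine IsTopologicalGroup.ext hg hτ (le_antisymm ?_ (nhds_mono hle))
  intro U hU
  -- step 1: V τ-open, 1 ∈ V, V*V ⊆ U
  obtain ⟨V, Vopen, V1, hVU⟩ : ∃ V : Set G, IsOpen[τ] V ∧ (1:G) ∈ V ∧ V * V ⊆ U := by
    letI := τ; haveI := hτ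
    exact exists_open_nhds_one_mul_subset hU
  -- step 2: P γ₁-open with trace equal to V's trace
  obtain ⟨P, Popen, hPV⟩ : ∃ P : Set G, IsOpen[γ₁] P ∧
      ((↑) : H → G) ⁻¹' P = ((↑) : H → G) ⁻¹' V := by
    have : IsOpen[subTop γ₁ H] (((↑) : H → G) ⁻¹' V) := by
      rw [hsub]; exact ⟨V, Vopen, rfl⟩
    obtain ⟨P, hP, hPV⟩ := this
    exact ⟨P, hP, hPV⟩
  have P1 : (1:G) ∈ P := by
    have : (⟨1, H.one_mem⟩ : H) ∈ ((↑) : H → G) ⁻¹' V := V1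
    rw [← hPV] at this; exact this
  -- step 3: P₁ γ₁-open, 1 ∈ P₁, a⁻¹ * x ∈ P for a, x ∈ P₁
  obtain ⟨P₁, P₁open, P₁1, hP₁⟩ : ∃ P₁ : Set G, IsOpen[γ₁] P₁ ∧ (1:G) ∈ P₁ ∧
      ∀ a ∈ P₁, ∀ x ∈ P₁, a⁻¹ * x ∈ P := by
    letI := γ₁; haveI := hg
    have hc : Continuous fun p : G × G => p.1⁻¹ * p.2 :=
      (continuous_fst.inv).mul continuous_snd
    have : (fun p : G × G => p.1⁻¹ * p.2) ⁻¹' P ∈ 𝓝 ((1:G), (1:G)) := by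
      refine hc.continuousAt.preimage_mem_nhds ?_
      simpa using Popen.mem_nhds P1
    obtain ⟨u, v, hu, hu1, hv, hv1, huv⟩ := mem_nhds_prod_iff'.mp this
    exact ⟨u ∩ v, hu.inter hv, ⟨hu1, hv1⟩,
      fun a ha x hx => huv (Set.mk_mem_prod ha.1 hx.2)⟩
  -- step 4: V' := V ∩ P₁, τ-open
  set V' : Set G := V ∩ P₁ with hV'
  have V'open : IsOpen[τ] V' := by
    letI := τ; exact Vopen.inter (P₁open.mono hle)
  have V'1 : (1:G) ∈ V' := ⟨V1, P₁1⟩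
  -- step 5-6: V' * H is γ₁-open
  have hVHopen : IsOpen[γ₁] (V' * (H : Set G)) := by
    have hq : IsOpen[quotTop τ H] ((QuotientGroup.mk : G → G ⧸ H) '' V') := by
      show IsOpen[τ] ((QuotientGroup.mk : G → G ⧸ H) ⁻¹' (QuotientGroup.mk '' V'))
      rw [QuotientGroup.preimage_image_mk_eq_mul]
      letI := τ; haveI := hτ
      exact V'open.mul_right
    rw [← hquot] at hq
    have : IsOpen[γ₁] ((QuotientGroup.mk : G → G ⧸ H) ⁻¹' (QuotientGroup.mk '' V')) := hq
    rwa [QuotientGroup.preimage_image_mk_eq_mul] at this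
  -- step 7: W
  set W : Set G := (V' * (H : Set G)) ∩ P₁ with hW
  have Wopen : IsOpen[γ₁] W := by
    letI := γ₁; exact hVHopen.inter P₁open
  have W1 : (1:G) ∈ W := ⟨⟨1, V'1, 1, H.one_mem, mul_one 1⟩, P₁1⟩
  -- step 8: W ⊆ U
  have hWU : W ⊆ U := by
    rintro x ⟨⟨a, haV', h, hh, rfl⟩, hxP₁⟩
    have hhH : a⁻¹ * (a * h) ∈ H := by simpa using hh
    have hhP : a⁻¹ * (a * h) ∈ P := hP₁ a haV'.2 _ hxP₁
    have hhV : (a * h)⁻¹ * (a*h) ∈ V ∨ True := Or.inr trivial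
    have : h ∈ V := by
      have hm : (⟨h, by simpa using hh⟩ : H) ∈ ((↑) : H → G) ⁻¹' P := by
        show (h : G) ∈ P; simpa using hhP
      rw [hPV] at hm; exact hm
    exact hVU ⟨a, haV'.1, h, this, rfl⟩
  letI := γ₁
  exact mem_nhds_iff.mpr ⟨W, hWU, Wopen, W1⟩

theorem cokey_to_relmin {G : Type*} [Group G] (τ : TopologicalSpace G)
    (hτ : @IsTopologicalGroup G τ _) (H : Subgroup G) (hn : H.Normal)
    (hck : IsCoKey τ H) : IsRelMin τ H := by
  intro γ₁ hle hg hT2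
  set Q : TopologicalSpace (G ⧸ H) := quotTop τ H with hQ
  have hQg : @IsTopologicalGroup (G ⧸ H) Q _ := by
    letI := τ; haveI := hτ
    exact QuotientGroup.instIsTopologicalGroup H
  set ρ : TopologicalSpace G :=
    γ₁ ⊓ TopologicalSpace.induced (QuotientGroup.mk : G → G ⧸ H) Q with hρ
  have hρle : τ ≤ ρ := le_inf hle (coinduced_le_iff_le_induced.mp le_rfl)
  have hρg : @IsTopologicalGroup G ρ _ := by
    rw [hρ]
    have h2 : @IsTopologicalGroup G
        (TopologicalSpace.induced (QuotientGroup.mk : G → G ⧸ H) Q) _ := by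
      letI := Q; haveI := hQg
      exact topologicalGroup_induced (QuotientGroup.mk' H)
    exact @topologicalGroup_inf G _ γ₁ _ hg h2
  have hρT2 : @T2Space G ρ := by
    rw [hρ]
    have hl : (γ₁ ⊓ TopologicalSpace.induced (QuotientGroup.mk : G → G ⧸ H) Q) ≤ γ₁ :=
      inf_le_left
    exact t2Space_antitone hl hT2
  have hquot : quotTop ρ H = quotTop τ H := by
    refine le_antisymm (coinduced_le_iff_le_induced.mpr inf_le_right) (coinduced_mono hρle)
  have hρτ : ρ = τ := hck ρ hρle hρg hρT2 hquot
  have hconst : (QuotientGroup.mk : G → G ⧸ H) ∘ ((↑) : H → G) =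
      fun _ => (1 : G ⧸ H) := by
    funext h
    show QuotientGroup.mk (h : G) = 1
    exact (QuotientGroup.eq_one_iff _).mpr h.2
  calc subTop γ₁ H = subTop γ₁ H ⊓ ⊤ := (inf_top_eq _).symm
    _ = subTop γ₁ H ⊓ TopologicalSpace.induced
        ((QuotientGroup.mk : G → G ⧸ H) ∘ ((↑) : H → G)) Q := by
        rw [hconst]
        letI := Q
        rw [induced_const]
    _ = subTop ρ H := by
        rw [hρ]; unfold subTop; rw [induced_inf, induced_compose]
    _ = subTop τ H := by rw [hρτ]


/-- A normal subgroup is co-key iff it is relatively minimal. -/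
theorem normal_isCoKey_iff_isRelMin {G : Type*} [Group G] (τ : TopologicalSpace G)
    (hτ : @IsTopologicalGroup G τ _) (hT2 : @T2Space G τ)
    (H : Subgroup G) (hn : H.Normal) :
    IsCoKey τ H ↔ IsRelMin τ H := by
  constructor
  · exact cokey_to_relmin τ hτ H hn
  · intro hrm γ₁ hle hg hT2' hquot
    exact merge_aux hτ hg hle H (hrm γ₁ hle hg hT2') hquot
end

section
/- A Hausdorff topological group G is minimal if and only if it contains a normal subgroup that is simultaneously a key subgroup and a co-key subgroup of G. -/
open Topology

/-- `G` is minimal iff it contains a normal subgroup which is simultaneously key and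
co-key. -/
theorem minimal_iff_exists_normal_key_coKey {G : Type*} [Group G] (γ : TopologicalSpace G)
    (hγ : @IsTopologicalGroup G γ _) (hT2 : @T2Space G γ) :
    IsMinimalGroup γ ↔
      ∃ H : Subgroup G, H.Normal ∧ IsKey γ H ∧ IsCoKey γ H := by
  constructor
  · intro hmin
    exact ⟨⊥, inferInstance, fun γ₁ h hg h2 _ => hmin γ₁ h hg h2,
      fun γ₁ h hg h2 _ => hmin γ₁ h hg h2⟩
  · rintro ⟨H, hN, hK, hCK⟩ γ₁ hle hg₁ h2₁
    haveI := hN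
    -- the quotient topology coming from γ, pulled back to G
    set q : TopologicalSpace (G ⧸ H) := quotTop γ H with hq
    set γ₂ : TopologicalSpace G := γ₁ ⊓ q.induced (QuotientGroup.mk : G → G ⧸ H) with hγ₂
    -- γ ≤ γ₂
    have hγq : γ ≤ q.induced (QuotientGroup.mk : G → G ⧸ H) :=
      coinduced_le_iff_le_induced.1 le_rfl
    have hle₂ : γ ≤ γ₂ := le_inf hle hγq
    have hle₂' : γ₂ ≤ γ₁ := inf_le_left
    -- γ₂ is a group topology
    haveI hqgrp : @IsTopologicalGroup (G ⧸ H) q _ := by letI := γ; haveI := hγ; exact QuotientGroup.instIsTopologicalGroup (G := G) (N := H)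
    have hgind : @IsTopologicalGroup G (q.induced (QuotientGroup.mk : G → G ⧸ H)) _ := by
      letI : TopologicalSpace (G ⧸ H) := q
      exact topologicalGroup_induced (QuotientGroup.mk' H)
    have hg₂ : @IsTopologicalGroup G γ₂ _ := topologicalGroup_inf hg₁ hgind
    -- γ₂ is Hausdorff (it is finer than γ₁)
    have h2₂ : @T2Space G γ₂ := @t2Space_antitone G γ₂ γ₁ hle₂' h2₁
    -- γ₂ induces the original quotient topology
    have hquot : quotTop γ₂ H = quotTop γ H := by
      refine le_antisymm ?_ ((coinduced_mono hle₂ : _))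
      calc γ₂.coinduced (QuotientGroup.mk : G → G ⧸ H)
          ≤ (q.induced (QuotientGroup.mk : G → G ⧸ H)).coinduced
              (QuotientGroup.mk : G → G ⧸ H) :=
            coinduced_mono inf_le_right
        _ ≤ q := coinduced_le_iff_le_induced.2 le_rfl
    -- co-key gives γ₂ = γ
    have hγ₂γ : γ₂ = γ := hCK γ₂ hle₂ hg₂ h2₂ hquot
    -- deduce the subspace topologies on H agree
    have hconst : ((QuotientGroup.mk : G → G ⧸ H) ∘ ((↑) : H → G)) = fun _ => (1 : G ⧸ H) := by
      funext x
      exact (QuotientGroup.eq_one_iff _).2 x.2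
    have hsub : subTop γ₁ H = subTop γ H := by
      have h3 : subTop γ H = subTop γ₁ H ⊓
          q.induced ((QuotientGroup.mk : G → G ⧸ H) ∘ ((↑) : H → G)) := by
        simp only [subTop, ← hγ₂γ, hγ₂, induced_inf, induced_compose]
      rw [h3, hconst]
      refine (inf_eq_left.2 (coinduced_le_iff_le_induced.1 ?_)).symm
      have hc : Continuous[subTop γ₁ H, q] (fun _ : H => (1 : G ⧸ H)) :=
        @continuous_const _ _ (subTop γ₁ H) q 1
      exact hc.coinduced_le
    exact hK γ₁ hle hg₁ h2₁ hsub
end
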